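/- For every t ≥ 0 and every w ∈ W, ∫_{−∞}^{0} e^{yD*}((D + D*)(e^{(y−t)D} w)) dy = e^{−tD} w. (This is the compression relation Φ* ∘ S_t ∘ Φ = e^{−tD} for the right-translation group S_t f = f(· − t) on L²(ℝ; W) and the map Φ of the explicit dilation.) -/

import Mathlib

open MeasureTheory RealInnerProductSpace

section Aux

variable {W : Type*} [NormedAddCommGroup W] [InnerProductSpace ℝ W] [FiniteDimensional ℝ W]

/-- derivative of `y ↦ exp (y • A) v`. -/
lemma aux_hasDerivAt_exp_apply (A : W →L[ℝ] W) (v : W) (s : ℝ) :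
    HasDerivAt (fun y : ℝ => NormedSpace.exp (y • A) v)
      (A (NormedSpace.exp (s • A) v)) s := by
  have h := (hasDerivAt_exp_smul_const' A s).clm_apply (hasDerivAt_const s v)
  simpa [ContinuousLinearMap.mul_apply] using h

/-- Exponential decay estimate. -/
lemma aux_decay (A : W →L[ℝ] W) (c : ℝ)
    (hA : ∀ v : W, c * ‖v‖ ^ 2 ≤ ⟪(A + ContinuousLinearMap.adjoint A) v, v⟫)
    (v : W) {y : ℝ} (hy : y ≤ 0) :
    ‖NormedSpace.exp (y • A) v‖ ≤ Real.exp (c * y / 2) * ‖v‖ := by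
  set u : ℝ → W := fun s => NormedSpace.exp (s • A) v with hu_def
  have hu : ∀ s, HasDerivAt u (A (u s)) s := fun s => aux_hasDerivAt_exp_apply A v s
  have key : ∀ s : ℝ, c * ⟪u s, u s⟫ ≤ ⟪u s, A (u s)⟫ + ⟪A (u s), u s⟫ := by
    intro s
    have h1 := hA (u s)
    have h2 : ⟪(A + ContinuousLinearMap.adjoint A) (u s), u s⟫
        = ⟪A (u s), u s⟫ + ⟪u s, A (u s)⟫ := by
      rw [ContinuousLinearMap.add_apply, inner_add_left,
        ContinuousLinearMap.adjoint_inner_left]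
    have h3 : ⟪u s, u s⟫ = ‖u s‖ ^ 2 := real_inner_self_eq_norm_sq (u s)
    rw [h3]; rw [h2] at h1; linarith
  set h : ℝ → ℝ := fun s => Real.exp ((-c) * s) * ⟪u s, u s⟫ with hh_def
  have hexp : ∀ s : ℝ, HasDerivAt (fun s : ℝ => Real.exp ((-c) * s))
      (Real.exp ((-c) * s) * (-c)) s := by
    intro s
    have hlin : HasDerivAt (fun s : ℝ => (-c) * s) (-c) s := by
      simpa using (hasDerivAt_id s).const_mul (-c)
    exact (Real.hasDerivAt_exp ((-c) * s)).comp s hlin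
  have hinner : ∀ s : ℝ, HasDerivAt (fun s => ⟪u s, u s⟫)
      (⟪u s, A (u s)⟫ + ⟪A (u s), u s⟫) s := fun s => (hu s).inner ℝ (hu s)
  have hh : ∀ s : ℝ, HasDerivAt h
      (Real.exp ((-c) * s) * (-c) * ⟪u s, u s⟫
        + Real.exp ((-c) * s) * (⟪u s, A (u s)⟫ + ⟪A (u s), u s⟫)) s :=
    fun s => (hexp s).mul (hinner s)
  have hmono : Monotone h := by
    apply monotone_of_deriv_nonneg
    · exact fun s => (hh s).differentiableAt
    · intro s
      rw [(hh s).deriv]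
      have hk := key s
      have he : 0 < Real.exp ((-c) * s) := Real.exp_pos _
      nlinarith
  have hle : h y ≤ h 0 := hmono hy
  have h0 : h 0 = ‖v‖ ^ 2 := by
    simp [hh_def, hu_def, NormedSpace.exp_zero, real_inner_self_eq_norm_sq]
  have hy2 : ‖u y‖ ^ 2 ≤ Real.exp (c * y) * ‖v‖ ^ 2 := by
    rw [h0, hh_def] at hle
    simp only at hle
    rw [real_inner_self_eq_norm_sq] at hle
    have he : 0 < Real.exp ((-c) * y) := Real.exp_pos _
    have : Real.exp ((-c) * y) * Real.exp (c * y) = 1 := by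
      rw [← Real.exp_add]; ring_nf; exact Real.exp_zero
    nlinarith
  have hb : (0:ℝ) ≤ Real.exp (c * y / 2) * ‖v‖ :=
    mul_nonneg (Real.exp_pos _).le (norm_nonneg _)
  refine le_of_pow_le_pow_left₀ two_ne_zero hb ?_
  calc ‖u y‖ ^ 2 ≤ Real.exp (c * y) * ‖v‖ ^ 2 := hy2
    _ = (Real.exp (c * y / 2) * ‖v‖) ^ 2 := by
        rw [mul_pow, sq (Real.exp (c * y / 2)), ← Real.exp_add]; ring_nf

/-- Coercivity constant. -/
lemma aux_coercive (T : W →L[ℝ] W) (hpos : ∀ w : W, w ≠ 0 → 0 < ⟪T w, w⟫) :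
    ∃ c : ℝ, 0 < c ∧ ∀ v : W, c * ‖v‖ ^ 2 ≤ ⟪T v, v⟫ := by
  rcases subsingleton_or_nontrivial W with hW | hW
  · refine ⟨1, one_pos, fun v => ?_⟩
    have : v = 0 := Subsingleton.elim v 0
    simp [this]
  · have hsph : (Metric.sphere (0:W) 1).Nonempty :=
      NormedSpace.sphere_nonempty.mpr zero_le_one
    have hcont : Continuous fun v : W => ⟪T v, v⟫ := T.continuous.inner continuous_id
    obtain ⟨v₀, hv₀, hmin⟩ := (isCompact_sphere (0:W) 1).exists_isMinOn hsph
      hcont.continuousOn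
    have hv₀norm : ‖v₀‖ = 1 := by simpa using hv₀
    have hv₀ne : v₀ ≠ 0 := by
      intro h; rw [h, norm_zero] at hv₀norm; norm_num at hv₀norm
    refine ⟨⟪T v₀, v₀⟫, hpos v₀ hv₀ne, fun v => ?_⟩
    rcases eq_or_ne v 0 with rfl | hv
    · simp
    · have hnv : (0:ℝ) < ‖v‖ := norm_pos_iff.mpr hv
      set u : W := ‖v‖⁻¹ • v with hu
      have hun : u ∈ Metric.sphere (0:W) 1 := by
        simp [hu, norm_smul, abs_of_pos (inv_pos.mpr hnv), inv_mul_cancel₀ hnv.ne']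
      have h1 : ⟪T v₀, v₀⟫ ≤ ⟪T u, u⟫ := hmin hun
      have h2 : ⟪T u, u⟫ = ‖v‖⁻¹ * (‖v‖⁻¹ * ⟪T v, v⟫) := by
        simp [hu, inner_smul_left, inner_smul_right]
      rw [h2] at h1
      have h4 : ⟪T v₀, v₀⟫ * ‖v‖ ^ 2 ≤ ‖v‖⁻¹ * (‖v‖⁻¹ * ⟪T v, v⟫) * ‖v‖ ^ 2 :=
        mul_le_mul_of_nonneg_right h1 (sq_nonneg _)
      have h5 : ‖v‖⁻¹ * (‖v‖⁻¹ * ⟪T v, v⟫) * ‖v‖ ^ 2 = ⟪T v, v⟫ := by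
        field_simp
      linarith

end Aux

/-- Let `W` be a finite-dimensional real inner product space and
`D : W → W` a linear map with adjoint `D*` such that `⟨(D + D*)w, w⟩ > 0` for every
nonzero `w`.  For every `t ≥ 0` and every `w ∈ W`,
`∫_{−∞}^{0} e^{yD*}((D + D*)(e^{(y−t)D} w)) dy = e^{−tD} w`
(the compression relation `Φ* ∘ S_t ∘ Φ = e^{−tD}` for the right-translation
group on `L²(ℝ; W)`). -/
theorem compression_relation_nonneg_time
    {W : Type*} [NormedAddCommGroup W] [InnerProductSpace ℝ W] [FiniteDimensional ℝ W]
    (D : W →L[ℝ] W)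
    (hpos : ∀ w : W, w ≠ 0 → 0 < ⟪(D + ContinuousLinearMap.adjoint D) w, w⟫) :
    ∀ t : ℝ, 0 ≤ t → ∀ w : W,
      ∫ y in Set.Iic (0 : ℝ),
        NormedSpace.exp (y • ContinuousLinearMap.adjoint D)
          ((D + ContinuousLinearMap.adjoint D) (NormedSpace.exp ((y - t) • D) w))
        = NormedSpace.exp ((-t) • D) w := by
  intro t ht w
  set Ds := ContinuousLinearMap.adjoint D with hDs
  obtain ⟨c, hc0, hcoer⟩ := aux_coercive (D + Ds) hpos
  -- coercivity for Ds
  have hcoer' : ∀ v : W, c * ‖v‖ ^ 2 ≤ ⟪(Ds + ContinuousLinearMap.adjoint Ds) v, v⟫ := by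
    intro v
    rw [hDs, ContinuousLinearMap.adjoint_adjoint, add_comm]
    exact hcoer v
  set f : ℝ → W := fun y => NormedSpace.exp (y • Ds) (NormedSpace.exp ((y - t) • D) w)
    with hf_def
  set F : ℝ → W := fun y =>
    NormedSpace.exp (y • Ds) ((D + Ds) (NormedSpace.exp ((y - t) • D) w)) with hF_def
  -- derivative
  have hderiv : ∀ y : ℝ, HasDerivAt f (F y) y := by
    intro y
    have h1 : HasDerivAt (fun y : ℝ => NormedSpace.exp (y • Ds))
        (NormedSpace.exp (y • Ds) * Ds) y := hasDerivAt_exp_smul_const Ds y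
    have h2 : HasDerivAt (fun y : ℝ => NormedSpace.exp ((y - t) • D))
        (D * NormedSpace.exp ((y - t) • D)) y := by
      have hg : HasDerivAt (fun y : ℝ => y - t) 1 y := (hasDerivAt_id y).sub_const t
      have h2' := (hasDerivAt_exp_smul_const' D (y - t)).scomp y hg
      simp only [one_smul] at h2'
      exact h2'
    have h2w : HasDerivAt (fun y : ℝ => NormedSpace.exp ((y - t) • D) w)
        ((D * NormedSpace.exp ((y - t) • D)) w) y := by
      simpa using h2.clm_apply (hasDerivAt_const y w)
    have h := h1.clm_apply h2w
    have heq : (NormedSpace.exp (y • Ds) * Ds) (NormedSpace.exp ((y - t) • D) w)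
        + NormedSpace.exp (y • Ds) ((D * NormedSpace.exp ((y - t) • D)) w) = F y := by
      simp [hF_def, ContinuousLinearMap.mul_apply, ContinuousLinearMap.add_apply,
        map_add, add_comm]
    rw [heq] at h
    exact h
  -- bound on F
  have hb : ∀ y : ℝ, y ≤ 0 →
      ‖F y‖ ≤ ‖D + Ds‖ * ‖w‖ * Real.exp (c * y) := by
    intro y hy
    have hyt : y - t ≤ 0 := by linarith
    have h1 : ‖F y‖ ≤ Real.exp (c * y / 2)
        * ‖(D + Ds) (NormedSpace.exp ((y - t) • D) w)‖ :=
      aux_decay Ds c hcoer' _ hy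
    have h2 : ‖(D + Ds) (NormedSpace.exp ((y - t) • D) w)‖
        ≤ ‖D + Ds‖ * ‖NormedSpace.exp ((y - t) • D) w‖ :=
      (D + Ds).le_opNorm _
    have h3 : ‖NormedSpace.exp ((y - t) • D) w‖ ≤ Real.exp (c * (y - t) / 2) * ‖w‖ :=
      aux_decay D c hcoer w hyt
    have h4 : Real.exp (c * (y - t) / 2) ≤ Real.exp (c * y / 2) := by
      apply Real.exp_le_exp.mpr; nlinarith
    have h5 : Real.exp (c * y / 2) * Real.exp (c * y / 2) = Real.exp (c * y) := by
      rw [← Real.exp_add]; ring_nf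
    have he : (0:ℝ) < Real.exp (c * y / 2) := Real.exp_pos _
    have hDn : (0:ℝ) ≤ ‖D + Ds‖ := norm_nonneg _
    have hwn : (0:ℝ) ≤ ‖w‖ := norm_nonneg _
    calc ‖F y‖ ≤ Real.exp (c * y / 2)
        * ‖(D + Ds) (NormedSpace.exp ((y - t) • D) w)‖ := h1
      _ ≤ Real.exp (c * y / 2) * (‖D + Ds‖ * (Real.exp (c * (y - t) / 2) * ‖w‖)) :=
          mul_le_mul_of_nonneg_left
            (h2.trans (mul_le_mul_of_nonneg_left h3 hDn)) he.le
      _ ≤ Real.exp (c * y / 2) * (‖D + Ds‖ * (Real.exp (c * y / 2) * ‖w‖)) := by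
          apply mul_le_mul_of_nonneg_left _ he.le
          apply mul_le_mul_of_nonneg_left _ hDn
          exact mul_le_mul_of_nonneg_right h4 hwn
      _ = ‖D + Ds‖ * ‖w‖ * Real.exp (c * y) := by rw [← h5]; ring
  -- continuity of F
  have hFc : Continuous F := by
    have happ : Continuous fun p : (W →L[ℝ] W) × W => p.1 p.2 :=
      isBoundedBilinearMap_apply.continuous
    have hc1 : Continuous fun y : ℝ => NormedSpace.exp (y • Ds) :=
      continuous_iff_continuousAt.2 fun y => (hasDerivAt_exp_smul_const Ds y).continuousAt
    have hc2 : Continuous fun y : ℝ =>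
        ((D + Ds) (NormedSpace.exp ((y - t) • D) w)) := by
      have : Continuous fun y : ℝ => NormedSpace.exp ((y - t) • D) :=
        (continuous_iff_continuousAt.2 fun y =>
          (hasDerivAt_exp_smul_const D y).continuousAt).comp
          (continuous_id.sub continuous_const)
      exact (D + Ds).continuous.comp
        (happ.comp (this.prodMk continuous_const))
    exact happ.comp (hc1.prodMk hc2)
  -- integrability of the dominating function
  have hgint : IntegrableOn (fun y => ‖D + Ds‖ * ‖w‖ * Real.exp (c * y))
      (Set.Iic (0:ℝ)) := by
    have h1 : Integrable ((Set.Iic (0:ℝ)).indicator Real.exp) :=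
      (integrable_indicator_iff measurableSet_Iic).mpr (integrableOn_exp_Iic 0)
    have h2 : Integrable fun x : ℝ => (Set.Iic (0:ℝ)).indicator Real.exp (c * x) :=
      h1.comp_mul_left' hc0.ne'
    have h3 : (fun x : ℝ => (Set.Iic (0:ℝ)).indicator Real.exp (c * x))
        = (Set.Iic (0:ℝ)).indicator fun x => Real.exp (c * x) := by
      funext x
      by_cases hx : x ≤ 0
      · have hcx : c * x ≤ 0 := mul_nonpos_iff.mpr (Or.inl ⟨hc0.le, hx⟩)
        simp [Set.indicator_of_mem, Set.mem_Iic, hx, hcx]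
      · have hcx : ¬ c * x ≤ 0 := by
          push_neg at hx ⊢; exact mul_pos hc0 hx
        simp [Set.indicator_of_notMem, Set.mem_Iic, hx, hcx]
    rw [h3] at h2
    exact ((integrable_indicator_iff measurableSet_Iic).mp h2).const_mul _
  -- integrability of F
  have hFint : IntegrableOn F (Set.Iic (0:ℝ)) := by
    apply Integrable.mono' hgint hFc.aestronglyMeasurable
    exact (ae_restrict_iff' measurableSet_Iic).mpr (ae_of_all _ hb)
  -- limit at -∞
  have htend : Filter.Tendsto f Filter.atBot (nhds 0) := by
    apply squeeze_zero_norm' (a := fun y => ‖w‖ * Real.exp (c * y))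
    · filter_upwards [Filter.Iic_mem_atBot (0:ℝ)] with y hy
      have hy0 : y ≤ 0 := hy
      have hyt : y - t ≤ 0 := by linarith
      have h1 : ‖f y‖ ≤ Real.exp (c * y / 2) * ‖NormedSpace.exp ((y - t) • D) w‖ :=
        aux_decay Ds c hcoer' _ hy0
      have h3 : ‖NormedSpace.exp ((y - t) • D) w‖ ≤ Real.exp (c * (y - t) / 2) * ‖w‖ :=
        aux_decay D c hcoer w hyt
      have h4 : Real.exp (c * (y - t) / 2) ≤ Real.exp (c * y / 2) :=
        Real.exp_le_exp.mpr (by nlinarith)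
      have h5 : Real.exp (c * y / 2) * Real.exp (c * y / 2) = Real.exp (c * y) := by
        rw [← Real.exp_add]; ring_nf
      have he : (0:ℝ) < Real.exp (c * y / 2) := Real.exp_pos _
      have hwn : (0:ℝ) ≤ ‖w‖ := norm_nonneg _
      calc ‖f y‖ ≤ Real.exp (c * y / 2) * ‖NormedSpace.exp ((y - t) • D) w‖ := h1
        _ ≤ Real.exp (c * y / 2) * (Real.exp (c * y / 2) * ‖w‖) := by
            apply mul_le_mul_of_nonneg_left _ he.le
            exact le_trans h3 (mul_le_mul_of_nonneg_right h4 hwn)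
        _ = ‖w‖ * Real.exp (c * y) := by rw [← h5]; ring
    · have h1 : Filter.Tendsto (fun y : ℝ => c * y) Filter.atBot Filter.atBot :=
        Filter.tendsto_id.const_mul_atBot hc0
      have h2 : Filter.Tendsto (fun y : ℝ => Real.exp (c * y)) Filter.atBot (nhds 0) :=
        Real.tendsto_exp_atBot.comp h1
      simpa using h2.const_mul ‖w‖
  -- FTC
  have hFTC := integral_Iic_of_hasDerivAt_of_tendsto' (a := (0:ℝ)) (f := f) (f' := F)
    (m := 0) (fun x _ => hderiv x) hFint htend
  have hf0 : f 0 = NormedSpace.exp ((-t) • D) w := by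
    simp [hf_def, NormedSpace.exp_zero, zero_sub]
  rw [hFTC, hf0, sub_zero]
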